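/- Let R be a finite commutative chain ring and Z ∈ R^{n×(n−r)} a matrix whose columns are linearly independent over R. Then there exist an n×n permutation matrix P, an invertible matrix Q ∈ R^{(n−r)×(n−r)}, and a matrix Z' ∈ R^{r×(n−r)} such that Z = P · [I_{n−r} ; Z'] · Q, where [I_{n−r}; Z'] is the block matrix stacking the identity I_{n−r} on top of Z'. -/

import Mathlib

open Matrix

lemma aux_nilpotent {R : Type*} [CommRing R] [IsLocalRing R] [Fintype R]
    {x : R} (hx : x ∈ nonunits R) : ∃ N, x ^ N = 0 := by
  obtain ⟨a, b, hab, h⟩ := Finite.exists_ne_map_eq_of_infinite (fun t : ℕ => x ^ t)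
  wlog hlt : a < b generalizing a b
  · exact this b a hab.symm h.symm (by omega)
  refine ⟨a, ?_⟩
  have hy : x ^ (b - a) ∈ nonunits R := fun hu =>
    hx ((isUnit_pow_iff (by omega)).mp hu)
  have hu : IsUnit (1 - x ^ (b - a)) :=
    IsLocalRing.isUnit_one_sub_self_of_mem_nonunits _ hy
  have h0 : x ^ a * (1 - x ^ (b - a)) = 0 := by
    have : x ^ a * x ^ (b - a) = x ^ b := by
      rw [← pow_add]; congr 1; omega
    rw [mul_sub, mul_one, this, ← h]
    ring
  exact (IsUnit.mul_left_eq_zero hu).mp h0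

lemma aux_field {k : Type*} [Field k] {m n : ℕ} (W : Matrix (Fin m) (Fin n) k)
    (h : LinearIndependent k W) :
    ∃ g : Fin m → Fin n, Function.Injective g ∧ (W.submatrix id g).det ≠ 0 := by
  classical
  have hrank : W.rank = m := by simpa using h.rank_matrix
  have hspan : Submodule.span k (Set.range Wᵀ) = ⊤ := by
    apply Submodule.eq_top_of_finrank_eq
    change Module.finrank k (Submodule.span k (Set.range W.col)) = _
    rw [← Matrix.rank_eq_finrank_span_cols, hrank, Module.finrank_fintype_fun_eq_card,
      Fintype.card_fin]
  obtain ⟨b, hb_sub, hb_span, hb_li⟩ := exists_linearIndependent k (Set.range Wᵀ)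
  rw [hspan] at hb_span
  have hBasis : Module.Basis b k (Fin m → k) := Module.Basis.mk hb_li (by rw [Subtype.range_coe, hb_span])
  haveI : Fintype b := FiniteDimensional.fintypeBasisIndex hBasis
  have hcard : Fintype.card b = m := by
    have h2 := Module.finrank_eq_card_basis hBasis
    rw [Module.finrank_fintype_fun_eq_card, Fintype.card_fin] at h2
    omega
  let e : Fin m ≃ b := (Fintype.equivFinOfCardEq hcard).symm
  have hchoice : ∀ i : Fin m, ∃ jdx : Fin n, Wᵀ jdx = (e i : Fin m → k) := fun i => hb_sub (e i).2
  choose g hgspec using hchoice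
  have hginj : Function.Injective g := by
    intro i i' hii
    have : (e i : Fin m → k) = (e i' : Fin m → k) := by rw [← hgspec, ← hgspec, hii]
    exact e.injective (Subtype.ext this)
  refine ⟨g, hginj, ?_⟩
  intro hdet
  obtain ⟨c, hc0, hc⟩ := (Matrix.exists_mulVec_eq_zero_iff).mpr hdet
  have hli : LinearIndependent k (fun i => Wᵀ (g i)) := by
    have he : (fun i => Wᵀ (g i)) = (fun x : b => (x : Fin m → k)) ∘ e := by
      funext i; rw [hgspec]; rfl
    rw [he]
    exact hb_li.comp e e.injective
  have hall := Fintype.linearIndependent_iff.mp hli c ?_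
  · exact hc0 (funext fun i => hall i)
  · funext i
    have hci := congrFun hc i
    simpa [Matrix.mulVec, dotProduct, Matrix.submatrix_apply, mul_comm,
      Finset.sum_apply] using hci

lemma aux_perm {m n : ℕ} (hmn : m ≤ n) (g : Fin m → Fin n) (hg : Function.Injective g) :
    ∃ σ : Equiv.Perm (Fin n), ∀ i : Fin m, σ (g i) = Fin.castLE hmn i := by
  classical
  have hci : Function.Injective (Fin.castLE hmn) := Fin.castLE_injective hmn
  let e1 : Fin m ≃ Set.range g := Equiv.ofInjective g hg
  let e2 : Fin m ≃ Set.range (Fin.castLE hmn) := Equiv.ofInjective _ hci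
  have hcard : Fintype.card ((Set.range g)ᶜ : Set (Fin n)) =
      Fintype.card ((Set.range (Fin.castLE hmn))ᶜ : Set (Fin n)) := by
    rw [Fintype.card_compl_set, Fintype.card_compl_set,
      Set.card_range_of_injective hg, Set.card_range_of_injective hci]
  let ec : ((Set.range g)ᶜ : Set (Fin n)) ≃ ((Set.range (Fin.castLE hmn))ᶜ : Set (Fin n)) :=
    Fintype.equivOfCardEq hcard
  refine ⟨(Equiv.Set.sumCompl (Set.range g)).symm.trans
    (((e1.symm.trans e2).sumCongr ec).trans (Equiv.Set.sumCompl _)), fun i => ?_⟩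
  simp only [Equiv.trans_apply]
  rw [Equiv.Set.sumCompl_symm_apply_of_mem (Set.mem_range_self i)]
  simp [e1, e2]

lemma aux_residue {R : Type*} [CommRing R] [Fintype R] [IsLocalRing R]
    [IsPrincipalIdealRing R] {m n : ℕ} (Z : Matrix (Fin n) (Fin m) R)
    (hZ : LinearIndependent R Z.transpose) :
    LinearIndependent (IsLocalRing.ResidueField R) (Z.map (IsLocalRing.residue R)).transpose := by
  classical
  set φ := IsLocalRing.residue R
  obtain ⟨π, hπ⟩ := (IsPrincipalIdealRing.principal (IsLocalRing.maximalIdeal R)).principal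
  have hπmem : π ∈ IsLocalRing.maximalIdeal R := by
    rw [hπ]; exact Ideal.subset_span rfl
  obtain ⟨N, hN⟩ := aux_nilpotent (IsLocalRing.mem_maximalIdeal π |>.mp hπmem)
  have hP : ∃ N, π ^ N = 0 := ⟨N, hN⟩
  set e := Nat.find hP with he
  have hespec : π ^ e = 0 := Nat.find_spec hP
  have hepos : 0 < e := by
    rcases Nat.eq_zero_or_pos e with h0 | h
    · rw [h0, pow_zero] at hespec; exact absurd hespec one_ne_zero
    · exact h
  have hemin : π ^ (e - 1) ≠ 0 := Nat.find_min hP (by omega)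
  refine Fintype.linearIndependent_iff.mpr ?_
  intro c hc j
  have hsurj : ∀ j, ∃ d : R, φ d = c j := fun j => Ideal.Quotient.mk_surjective (c j)
  choose d hd using hsurj
  have hmem : ∀ i : Fin n, (∑ t, d t * Z i t) ∈ IsLocalRing.maximalIdeal R := by
    intro i
    have hφ : φ (∑ t, d t * Z i t) = 0 := by
      rw [map_sum]
      have hci := congrFun hc i
      simpa [Finset.sum_apply, hd, Matrix.map_apply] using hci
    exact (Ideal.Quotient.eq_zero_iff_mem).mp hφ
  have hz : ∀ t, π ^ (e - 1) * d t = 0 := by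
    apply Fintype.linearIndependent_iff.mp hZ
    funext i
    have : ∃ a, ∑ t, d t * Z i t = π * a := by
      have := hmem i
      rw [hπ] at this
      rw [Submodule.mem_span_singleton] at this
      obtain ⟨a, ha⟩ := this
      exact ⟨a, by rw [← ha]; simp [smul_eq_mul, mul_comm]⟩
    obtain ⟨a, ha⟩ := this
    calc (∑ t, (π ^ (e - 1) * d t) • Z.transpose t) i
        = π ^ (e - 1) * ∑ t, d t * Z i t := by
          simp [Finset.sum_apply, Finset.mul_sum, mul_assoc, Matrix.transpose_apply]
      _ = π ^ (e - 1) * (π * a) := by rw [ha]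
      _ = π ^ e * a := by rw [← mul_assoc, ← pow_succ]; congr 2; omega
      _ = 0 := by rw [hespec, zero_mul]
  by_contra hcj
  have hdj : IsUnit (d j) := by
    rw [← IsLocalRing.notMem_maximalIdeal]
    intro hmem'
    exact hcj (by rw [← hd j]; exact (Ideal.Quotient.eq_zero_iff_mem).mpr hmem')
  exact hemin ((IsUnit.mul_left_eq_zero hdj).mp (hz j))

/-- Over a finite commutative chain ring, a matrix `Z ∈ R^{n×(n-r)}` with
linearly independent columns factors as `P * [I_{n-r}; Z'] * Q` with `P` a permutation
matrix, `Q` invertible and `Z' ∈ R^{r×(n-r)}`. -/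
theorem stmt8 (R : Type*) [CommRing R] [Fintype R] [IsLocalRing R]
    [IsPrincipalIdealRing R]
    (n r : ℕ) (hr : r ≤ n) (Z : Matrix (Fin n) (Fin (n - r)) R)
    (hZ : LinearIndependent R Z.transpose) :
    ∃ (σ : Equiv.Perm (Fin n)) (Q : Matrix (Fin (n - r)) (Fin (n - r)) R)
      (Z' : Matrix (Fin r) (Fin (n - r)) R),
      IsUnit Q ∧
      Z = (σ.permMatrix R) *
          (Matrix.of fun (i : Fin n) (j : Fin (n - r)) =>
            if h : (i : ℕ) < n - r then (if (i : ℕ) = (j : ℕ) then (1 : R) else 0)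
            else Z' ⟨(i : ℕ) - (n - r), by omega⟩ j) * Q := by
  classical
  have hmn : n - r ≤ n := Nat.sub_le n r
  set φ := IsLocalRing.residue R with hφ
  have hres := aux_residue Z hZ
  obtain ⟨g, hg, hdet⟩ := aux_field ((Z.map φ).transpose) hres
  set A : Matrix (Fin (n - r)) (Fin (n - r)) R := Z.submatrix g id with hA
  have hsub : ((Z.map φ).transpose).submatrix id g = (A.map φ).transpose := by
    ext i j; simp [hA, Matrix.transpose_apply, Matrix.submatrix_apply, Matrix.map_apply]
  have hdetA : IsUnit A.det := by
    rw [hsub, Matrix.det_transpose] at hdet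
    have hdet' : φ A.det ≠ 0 := by
      rw [RingHom.map_det]
      simpa [RingHom.mapMatrix_apply] using hdet
    rw [← IsLocalRing.notMem_maximalIdeal]
    intro hmem
    exact hdet' ((Ideal.Quotient.eq_zero_iff_mem).mpr hmem)
  have hAunit : IsUnit A := (Matrix.isUnit_iff_isUnit_det A).mpr hdetA
  obtain ⟨σ, hσ⟩ := aux_perm hmn g hg
  set N : Matrix (Fin n) (Fin (n - r)) R := (Z.submatrix σ.symm id) * A⁻¹ with hN
  refine ⟨σ, A,
    (Matrix.of (fun (i : Fin r) (j : Fin (n - r)) =>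
      N ⟨(n - r) + (i : ℕ), by have := i.isLt; omega⟩ j) : Matrix (Fin r) (Fin (n - r)) R),
    hAunit, ?_⟩
  have hMN : (Matrix.of fun (i : Fin n) (j : Fin (n - r)) =>
      if h : (i : ℕ) < n - r then (if (i : ℕ) = (j : ℕ) then (1 : R) else 0)
      else (Matrix.of (fun (i : Fin r) (j : Fin (n - r)) =>
        N ⟨(n - r) + (i : ℕ), by have := i.isLt; omega⟩ j))
        ⟨(i : ℕ) - (n - r), by omega⟩ j) = N := by
    ext i j
    by_cases h : (i : ℕ) < n - r
    · simp only [Matrix.of_apply, dif_pos h]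
      have hrow : σ.symm i = g ⟨(i : ℕ), h⟩ := by
        apply σ.injective
        rw [Equiv.apply_symm_apply, hσ]
        exact Fin.ext rfl
      have hNi : N i j = (A * A⁻¹) ⟨(i : ℕ), h⟩ j := by
        rw [hN]
        simp only [Matrix.mul_apply, Matrix.submatrix_apply, id_eq, hrow]
        rfl
      rw [hNi, Matrix.mul_nonsing_inv A hdetA, Matrix.one_apply]
      simp [Fin.ext_iff]
    · simp only [Matrix.of_apply, dif_neg h]
      congr 1
      exact Fin.ext (by simp; omega)
  rw [hMN]
  have hperm : (σ.permMatrix R) * (N * A) = ((N * A).submatrix σ id) :=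
    PEquiv.toMatrix_toPEquiv_mul σ (N * A)
  rw [Matrix.mul_assoc, hperm, hN, Matrix.mul_assoc, Matrix.nonsing_inv_mul A hdetA,
    Matrix.mul_one]
  ext i j
  simp [Matrix.submatrix_apply]
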